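/- Let (𝐬, r(𝐬)) ∈ 𝒮 with 𝐬 = ([i_1,j_1],…,[i_r,j_r]) and r(𝐬) = (1, r_1, …, r_k), and set 𝐬° = ([i_r,j_r],…,[i_1,j_1]). Then (𝐬°, r(𝐬°)) ∈ 𝒮, where r(𝐬°) = (1, r−r_{k−1}+1, …, r−r_1+1, r). Moreover 𝐬 is connected if and only if 𝐬° is connected, and if 𝐬¹ ∨ ⋯ ∨ 𝐬^ℓ is the prime decomposition of 𝐬 then the prime decomposition of 𝐬° is (𝐬^ℓ)° ∨ ⋯ ∨ (𝐬¹)°. -/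
import Mathlib


namespace AltSnakePaper

/-- `[i,j] ∈ 𝕀ₙ`: the interval condition `0 ≤ j - i ≤ n + 1`. -/
def InIn (n : ℕ) (i j : ℤ) : Prop := 0 ≤ j - i ∧ j - i ≤ (n : ℤ) + 1

/-- The intervals `[i1,j1]` and `[i2,j2]` overlap. -/
def Overlap (i1 j1 i2 j2 : ℤ) : Prop :=
  (i1 < i2 ∧ i2 ≤ j1 ∧ j1 < j2) ∨ (i2 < i1 ∧ i1 ≤ j2 ∧ j2 < j1)

/-- The pair `([i1,j1],[i2,j2])` is connected. -/
def ConnPair (n : ℕ) (i1 j1 i2 j2 : ℤ) : Prop :=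
  Overlap i1 j1 i2 j2 ∧ InIn n i1 j2 ∧ InIn n i2 j1

/-- The subtuple `𝐬(a,b)` (entries with indices `a+1, …, b`) lies in `S_→`. -/
def SRight (ii jj : ℕ → ℤ) (a b : ℕ) : Prop :=
  ∀ s, a + 1 ≤ s → s + 1 ≤ b → ii s < ii (s + 1) ∧ jj s < jj (s + 1)

/-- The subtuple `𝐬(a,b)` (entries with indices `a+1, …, b`) lies in `S_←`. -/
def SLeft (ii jj : ℕ → ℤ) (a b : ℕ) : Prop :=
  ∀ s, a + 1 ≤ s → s + 1 ≤ b → ii (s + 1) < ii s ∧ jj (s + 1) < jj s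

/-- `(𝐬, r(𝐬))` is an alternating snake, where `𝐬 = ([i_1,j_1],…,[i_r,j_r])`
(encoded by `ii jj : ℕ → ℤ`, entries indexed `1,…,r`) and
`r(𝐬) = (r_0, r_1, …, r_k)` (encoded by `rr : ℕ → ℕ`). -/
structure IsAltSnake (n r k : ℕ) (rr : ℕ → ℕ) (ii jj : ℕ → ℤ) : Prop where
  hr : 1 ≤ r
  hk : k ≤ r
  mem : ∀ s, 1 ≤ s → s ≤ r → InIn n (ii s) (jj s)
  distinct : ∀ s p, 1 ≤ s → s ≤ r → 1 ≤ p → p ≤ r → s ≠ p → ii s ≠ ii p ∨ jj s ≠ jj p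
  rr0 : rr 0 = 1
  rrk : rr k = r
  rrmono : ∀ m, m < k → rr m < rr (m + 1)
  mono : ∀ m, 1 ≤ m → m ≤ k →
      SRight ii jj (rr (m - 1) - 1) (rr m) ∨ SLeft ii jj (rr (m - 1) - 1) (rr m)
  alt : ∀ m, 1 ≤ m → m < k →
      (SRight ii jj (rr (m - 1) - 1) (rr m) ↔ SLeft ii jj (rr m - 1) (rr (m + 1)))
  nonoverlap : ∀ m s t, 1 ≤ m → m < k → 1 ≤ s → s < rr m → rr m < t → t ≤ r →
      ¬ Overlap (ii s) (jj s) (ii t) (jj t)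

/-- The subtuple `𝐬(a,b)` is connected: all consecutive pairs are connected. -/
def SegConnected (n : ℕ) (ii jj : ℕ → ℤ) (a b : ℕ) : Prop :=
  ∀ s, a + 1 ≤ s → s + 1 ≤ b → ConnPair n (ii s) (jj s) (ii (s + 1)) (jj (s + 1))

/-- The subtuple `𝐬(a,b)` (with its induced r-vector, whose internal break points
are the `rr m` with `a + 1 < rr m < b`) is prime. -/
def SegPrime (n k : ℕ) (rr : ℕ → ℕ) (ii jj : ℕ → ℤ) (a b : ℕ) : Prop :=
  SegConnected n ii jj a b ∧
    ∀ m, 1 ≤ m → m < k → a + 1 < rr m → rr m < b →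
      ii (rr m - 1) ≠ ii (rr m + 1) ∧ jj (rr m - 1) ≠ jj (rr m + 1)

/-- The subtuple `𝐬(a,b)` (with its induced r-vector) is stable. -/
def SegStable (k : ℕ) (rr : ℕ → ℕ) (ii jj : ℕ → ℤ) (a b : ℕ) : Prop :=
  ∀ m, 1 ≤ m → m < k → a + 1 < rr m → rr m < b →
    (ii (rr m + 1) < ii (rr m - 1) → jj (rr m + 1) < ii (rr m - 1)) ∧
    (jj (rr m - 1) < jj (rr m + 1) → jj (rr m - 1) < ii (rr m + 1))

/-- The alternating snake is stable. -/
def Stable (k : ℕ) (rr : ℕ → ℕ) (ii jj : ℕ → ℤ) : Prop :=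
  ∀ m, 1 ≤ m → m < k →
    (ii (rr m + 1) < ii (rr m - 1) → jj (rr m + 1) < ii (rr m - 1)) ∧
    (jj (rr m - 1) < jj (rr m + 1) → jj (rr m - 1) < ii (rr m + 1))

/-- The boundary condition allowing a cut of the snake at `p = rr m - ε`:
`a_{r_m-1} = a_{r_m+1}` for some `a ∈ {i, j}`, with `ε ∈ {0,1}` chosen so that, `b`
denoting the other member of `{i,j}`, one has `b_{r_m−1+2ε} < b_{r_m+1−2ε}` if
`𝐬(r_m−2, r_m) ∈ S_←` and `b_{r_m+1−2ε} < b_{r_m−1+2ε}` if `𝐬(r_m−2, r_m) ∈ S_→`. -/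
def BoundaryCond (k : ℕ) (rr : ℕ → ℕ) (ii jj : ℕ → ℤ) (m ε : ℕ) : Prop :=
  (ii (rr m - 1) = ii (rr m + 1) ∧
    (SLeft ii jj (rr m - 2) (rr m) → jj (rr m - 1 + 2 * ε) < jj (rr m + 1 - 2 * ε)) ∧
    (SRight ii jj (rr m - 2) (rr m) → jj (rr m + 1 - 2 * ε) < jj (rr m - 1 + 2 * ε))) ∨
  (jj (rr m - 1) = jj (rr m + 1) ∧
    (SLeft ii jj (rr m - 2) (rr m) → ii (rr m - 1 + 2 * ε) < ii (rr m + 1 - 2 * ε)) ∧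
    (SRight ii jj (rr m - 2) (rr m) → ii (rr m + 1 - 2 * ε) < ii (rr m - 1 + 2 * ε)))

/-- `p` is an admissible cut point for the prime decomposition. -/
def CutAt (n r k : ℕ) (rr : ℕ → ℕ) (ii jj : ℕ → ℤ) (p : ℕ) : Prop :=
  p = r ∨
  ¬ ConnPair n (ii p) (jj p) (ii (p + 1)) (jj (p + 1)) ∨
  ∃ m ε, 1 ≤ m ∧ m < k ∧ ε ≤ 1 ∧ p = rr m - ε ∧ BoundaryCond k rr ii jj m ε

/-- `0 = c 0 < c 1 < ⋯ < c L = r` are the cut points of a prime decomposition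
of the snake, the prime factors being the segments `𝐬(c t, c (t+1))`. -/
def IsPrimeDecomp (n r k : ℕ) (rr : ℕ → ℕ) (ii jj : ℕ → ℤ) (c : ℕ → ℕ) (L : ℕ) : Prop :=
  1 ≤ L ∧ c 0 = 0 ∧ c L = r ∧ (∀ t, t < L → c t < c (t + 1)) ∧
  (∀ t, t < L → SegPrime n k rr ii jj (c t) (c (t + 1))) ∧
  (∀ t, 1 ≤ t → t ≤ L → CutAt n r k rr ii jj (c t))

/-- The segment `𝐬(a,b)` is contained in a prime factor of `𝐬`. -/
def ContainedInPF (n r k : ℕ) (rr : ℕ → ℕ) (ii jj : ℕ → ℤ) (a b : ℕ) : Prop :=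
  ∃ c L t, IsPrimeDecomp n r k rr ii jj c L ∧ t < L ∧ c t ≤ a ∧ b ≤ c (t + 1)



lemma overlap_symm {i1 j1 i2 j2 : ℤ} : Overlap i1 j1 i2 j2 ↔ Overlap i2 j2 i1 j1 := by
  unfold Overlap; tauto

lemma connPair_symm {n : ℕ} {i1 j1 i2 j2 : ℤ} :
    ConnPair n i1 j1 i2 j2 ↔ ConnPair n i2 j2 i1 j1 := by
  unfold ConnPair
  rw [overlap_symm]
  tauto

lemma mono_of_strict {k : ℕ} {rr : ℕ → ℕ} (hmono : ∀ m, m < k → rr m < rr (m + 1)) :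
    ∀ a b, a ≤ b → b ≤ k → rr a ≤ rr b := by
  intro a b hab hbk
  induction b with
  | zero => exact le_of_eq (by rw [Nat.le_zero.mp hab])
  | succ b ih =>
    by_cases h' : a = b + 1
    · exact le_of_eq (by rw [h'])
    · have h1 := ih (by omega) (by omega)
      have h2 := hmono b (by omega)
      omega

lemma rev_SRight (r a b : ℕ) (ii jj : ℕ → ℤ) (hb : b ≤ r) :
    SRight (fun s => ii (r + 1 - s)) (fun s => jj (r + 1 - s)) a b ↔
      SLeft ii jj (r - b) (r - a) := by
  constructor
  · intro h t ht1 ht2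
    have h1 := h (r - t) (by omega) (by omega)
    simp only [show r + 1 - (r - t) = t + 1 from by omega,
      show r + 1 - (r - t + 1) = t from by omega] at h1
    exact h1
  · intro h s hs1 hs2
    have h1 := h (r - s) (by omega) (by omega)
    simp only [show r - s + 1 = r + 1 - s from by omega] at h1
    show ii (r + 1 - s) < ii (r + 1 - (s + 1)) ∧ jj (r + 1 - s) < jj (r + 1 - (s + 1))
    rw [show r + 1 - (s + 1) = r - s from by omega]
    exact h1

lemma rev_SLeft (r a b : ℕ) (ii jj : ℕ → ℤ) (hb : b ≤ r) :
    SLeft (fun s => ii (r + 1 - s)) (fun s => jj (r + 1 - s)) a b ↔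
      SRight ii jj (r - b) (r - a) := by
  constructor
  · intro h t ht1 ht2
    have h1 := h (r - t) (by omega) (by omega)
    simp only [show r + 1 - (r - t) = t + 1 from by omega,
      show r + 1 - (r - t + 1) = t from by omega] at h1
    exact h1
  · intro h s hs1 hs2
    have h1 := h (r - s) (by omega) (by omega)
    simp only [show r - s + 1 = r + 1 - s from by omega] at h1
    show ii (r + 1 - (s + 1)) < ii (r + 1 - s) ∧ jj (r + 1 - (s + 1)) < jj (r + 1 - s)
    rw [show r + 1 - (s + 1) = r - s from by omega]
    exact h1

lemma rev_conn (n r a b : ℕ) (ii jj : ℕ → ℤ) (hb : b ≤ r) :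
    SegConnected n (fun s => ii (r + 1 - s)) (fun s => jj (r + 1 - s)) a b ↔
      SegConnected n ii jj (r - b) (r - a) := by
  constructor
  · intro h t ht1 ht2
    have h1 := h (r - t) (by omega) (by omega)
    simp only [show r + 1 - (r - t) = t + 1 from by omega,
      show r + 1 - (r - t + 1) = t from by omega] at h1
    exact connPair_symm.mp h1
  · intro h s hs1 hs2
    have h1 := h (r - s) (by omega) (by omega)
    simp only [show r - s + 1 = r + 1 - s from by omega] at h1
    show ConnPair n (ii (r + 1 - s)) (jj (r + 1 - s)) (ii (r + 1 - (s + 1))) (jj (r + 1 - (s + 1)))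
    rw [show r + 1 - (s + 1) = r - s from by omega]
    exact connPair_symm.mp h1

lemma pair_flip {n r k : ℕ} {rr : ℕ → ℕ} {ii jj : ℕ → ℤ} (h : IsAltSnake n r k rr ii jj)
    {m : ℕ} (hm1 : 1 ≤ m) (hm2 : m < k) :
    ((ii (rr m - 1) < ii (rr m) ∧ jj (rr m - 1) < jj (rr m)) ↔
      (ii (rr m + 1) < ii (rr m) ∧ jj (rr m + 1) < jj (rr m))) ∧
    ((ii (rr m) < ii (rr m - 1) ∧ jj (rr m) < jj (rr m - 1)) ↔
      (ii (rr m) < ii (rr m + 1) ∧ jj (rr m) < jj (rr m + 1))) := by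
  have hmle := mono_of_strict h.rrmono
  have h0 : rr 0 = 1 := h.rr0
  have hlt0 : rr (m - 1) < rr m := by
    have := h.rrmono (m - 1) (by omega)
    rwa [show m - 1 + 1 = m from by omega] at this
  have hlt1 : rr m < rr (m + 1) := h.rrmono m hm2
  have h1m : 1 ≤ rr (m - 1) := by
    have := hmle 0 (m - 1) (by omega) (by omega); omega
  have e1 : rr m - 1 + 1 = rr m := by omega
  have hmonoM := h.mono m hm1 (le_of_lt hm2)
  have hmonoM1 := h.mono (m + 1) (by omega) (by omega)
  rw [Nat.add_sub_cancel] at hmonoM1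
  have halt := h.alt m hm1 hm2
  have hPor : (ii (rr m - 1) < ii (rr m) ∧ jj (rr m - 1) < jj (rr m)) ∨
      (ii (rr m) < ii (rr m - 1) ∧ jj (rr m) < jj (rr m - 1)) := by
    rcases hmonoM with H | H
    · have := H (rr m - 1) (by omega) (by omega)
      rw [e1] at this; exact Or.inl this
    · have := H (rr m - 1) (by omega) (by omega)
      rw [e1] at this; exact Or.inr this
  have hQor : (ii (rr m) < ii (rr m + 1) ∧ jj (rr m) < jj (rr m + 1)) ∨
      (ii (rr m + 1) < ii (rr m) ∧ jj (rr m + 1) < jj (rr m)) := by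
    rcases hmonoM1 with H | H
    · exact Or.inl (H (rr m) (by omega) (by omega))
    · exact Or.inr (H (rr m) (by omega) (by omega))
  have hA : (ii (rr m - 1) < ii (rr m) ∧ jj (rr m - 1) < jj (rr m)) →
      (ii (rr m + 1) < ii (rr m) ∧ jj (rr m + 1) < jj (rr m)) := by
    intro hp
    have hSR : SRight ii jj (rr (m - 1) - 1) (rr m) := by
      rcases hmonoM with H | H
      · exact H
      · exfalso
        have := H (rr m - 1) (by omega) (by omega)
        rw [e1] at this
        obtain ⟨h1, -⟩ := this
        obtain ⟨h2, -⟩ := hp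
        omega
    exact (halt.mp hSR) (rr m) (by omega) (by omega)
  have hB : (ii (rr m + 1) < ii (rr m) ∧ jj (rr m + 1) < jj (rr m)) →
      (ii (rr m - 1) < ii (rr m) ∧ jj (rr m - 1) < jj (rr m)) := by
    intro hq
    have hSL : SLeft ii jj (rr m - 1) (rr (m + 1)) := by
      rcases hmonoM1 with H | H
      · exfalso
        have := H (rr m) (by omega) (by omega)
        obtain ⟨h1, -⟩ := this
        obtain ⟨h2, -⟩ := hq
        omega
      · exact H
    have := (halt.mpr hSL) (rr m - 1) (by omega) (by omega)
    rwa [e1] at this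
  constructor
  · exact ⟨hA, hB⟩
  · constructor
    · intro hp
      rcases hQor with H | H
      · exact H
      · exfalso
        have := hB H
        obtain ⟨h1, -⟩ := this
        obtain ⟨h2, -⟩ := hp
        omega
    · intro hq
      rcases hPor with H | H
      · exfalso
        have := hA H
        obtain ⟨h1, -⟩ := this
        obtain ⟨h2, -⟩ := hq
        omega
      · exact H

lemma rev_boundary {n r k : ℕ} {rr : ℕ → ℕ} {ii jj : ℕ → ℤ} (h : IsAltSnake n r k rr ii jj)
    {m ε : ℕ} (hm1 : 1 ≤ m) (hm2 : m < k) (hε : ε ≤ 1)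
    (hbc : BoundaryCond k rr ii jj m ε) :
    BoundaryCond k (fun t => r + 1 - rr (k - t)) (fun s => ii (r + 1 - s))
      (fun s => jj (r + 1 - s)) (k - m) (1 - ε) := by
  have hmle := mono_of_strict h.rrmono
  have h0 := h.rr0
  have hkk := h.rrk
  have hR2 : 2 ≤ rr m := by
    have h01 : rr 0 < rr 1 := h.rrmono 0 (by omega)
    have := hmle 1 m hm1 (by omega)
    omega
  have hRr : rr m + 1 ≤ r := by
    have h1 := h.rrmono m hm2
    have h2 := hmle (m + 1) k (by omega) le_rfl
    omega
  have e0 : k - (k - m) = m := by omega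
  have hpf := pair_flip h hm1 hm2
  unfold BoundaryCond
  simp only [e0]
  have eA : r + 1 - (r + 1 - rr m - 1) = rr m + 1 := by omega
  have eB : r + 1 - (r + 1 - rr m + 1) = rr m - 1 := by omega
  have eC : r + 1 - (r + 1 - rr m - 1 + 2 * (1 - ε)) = rr m - 1 + 2 * ε := by omega
  have eD : r + 1 - (r + 1 - rr m + 1 - 2 * (1 - ε)) = rr m + 1 - 2 * ε := by omega
  simp only [eA, eB, eC, eD]
  have hQinc : SLeft (fun s => ii (r + 1 - s)) (fun s => jj (r + 1 - s))
      (r + 1 - rr m - 2) (r + 1 - rr m) →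
      ii (rr m) < ii (rr m + 1) ∧ jj (rr m) < jj (rr m + 1) := by
    intro hs
    have hq := hs (r - rr m) (by omega) (by omega)
    simp only [show r + 1 - (r - rr m + 1) = rr m from by omega,
      show r + 1 - (r - rr m) = rr m + 1 from by omega] at hq
    exact hq
  have hQdec : SRight (fun s => ii (r + 1 - s)) (fun s => jj (r + 1 - s))
      (r + 1 - rr m - 2) (r + 1 - rr m) →
      ii (rr m + 1) < ii (rr m) ∧ jj (rr m + 1) < jj (rr m) := by
    intro hs
    have hq := hs (r - rr m) (by omega) (by omega)
    simp only [show r + 1 - (r - rr m + 1) = rr m from by omega,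
      show r + 1 - (r - rr m) = rr m + 1 from by omega] at hq
    exact hq
  have mkSL : (ii (rr m) < ii (rr m - 1) ∧ jj (rr m) < jj (rr m - 1)) →
      SLeft ii jj (rr m - 2) (rr m) := by
    intro hp s hs1 hs2
    have hseq : s = rr m - 1 := by omega
    subst hseq
    rw [show rr m - 1 + 1 = rr m from by omega]
    exact hp
  have mkSR : (ii (rr m - 1) < ii (rr m) ∧ jj (rr m - 1) < jj (rr m)) →
      SRight ii jj (rr m - 2) (rr m) := by
    intro hp s hs1 hs2
    have hseq : s = rr m - 1 := by omega
    subst hseq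
    rw [show rr m - 1 + 1 = rr m from by omega]
    exact hp
  rcases hbc with ⟨heq, hsl, hsr⟩ | ⟨heq, hsl, hsr⟩
  · left
    refine ⟨heq.symm, ?_, ?_⟩
    · intro hs
      exact hsl (mkSL (hpf.2.mpr (hQinc hs)))
    · intro hs
      exact hsr (mkSR (hpf.1.mpr (hQdec hs)))
  · right
    refine ⟨heq.symm, ?_, ?_⟩
    · intro hs
      exact hsl (mkSL (hpf.2.mpr (hQinc hs)))
    · intro hs
      exact hsr (mkSR (hpf.1.mpr (hQdec hs)))


/-- Lemma (elemalt (iii)): the reversal `𝐬° = ([i_r,j_r],…,[i_1,j_1])` is an alternating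
snake with r-vector `(1, r−r_{k−1}+1, …, r−r_1+1, r)`, `𝐬` is connected iff `𝐬°` is, and
the prime decomposition of `𝐬°` is the reversal of the prime decomposition of `𝐬`. -/
theorem stmt_3 (n r k : ℕ) (hn : 1 ≤ n) (rr : ℕ → ℕ) (ii jj : ℕ → ℤ)
    (h : IsAltSnake n r k rr ii jj) :
    IsAltSnake n r k (fun t => r + 1 - rr (k - t))
      (fun s => ii (r + 1 - s)) (fun s => jj (r + 1 - s)) ∧
    (SegConnected n ii jj 0 r ↔
      SegConnected n (fun s => ii (r + 1 - s)) (fun s => jj (r + 1 - s)) 0 r) ∧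
    (∀ c L, IsPrimeDecomp n r k rr ii jj c L →
      IsPrimeDecomp n r k (fun t => r + 1 - rr (k - t))
        (fun s => ii (r + 1 - s)) (fun s => jj (r + 1 - s))
        (fun t => r - c (L - t)) L) := by
  have hmle := mono_of_strict h.rrmono
  have h00 := h.rr0
  have hkk := h.rrk
  have hrrle : ∀ m, m ≤ k → rr m ≤ r := by
    intro m hm
    have := hmle m k hm le_rfl
    omega
  have hrr1 : ∀ m, m ≤ k → 1 ≤ rr m := by
    intro m hm
    have := hmle 0 m (Nat.zero_le m) hm
    omega
  refine ⟨⟨h.hr, h.hk, ?_, ?_, ?_, ?_, ?_, ?_, ?_, ?_⟩, ?_, ?_⟩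
  · -- mem
    intro s hs1 hs2
    exact h.mem (r + 1 - s) (by omega) (by omega)
  · -- distinct
    intro s p hs1 hs2 hp1 hp2 hsp
    exact h.distinct (r + 1 - s) (r + 1 - p) (by omega) (by omega) (by omega) (by omega)
      (by omega)
  · -- rr0
    show r + 1 - rr (k - 0) = 1
    rw [Nat.sub_zero, h.rrk]
    omega
  · -- rrk
    show r + 1 - rr (k - k) = r
    rw [Nat.sub_self, h.rr0]
    omega
  · -- rrmono
    intro m hm
    show r + 1 - rr (k - m) < r + 1 - rr (k - (m + 1))
    have h1 := h.rrmono (k - (m + 1)) (by omega)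
    rw [show k - (m + 1) + 1 = k - m from by omega] at h1
    have h2 := hrrle (k - m) (by omega)
    omega
  · -- mono
    intro m hm1 hm2
    show SRight (fun s => ii (r + 1 - s)) (fun s => jj (r + 1 - s))
        (r + 1 - rr (k - (m - 1)) - 1) (r + 1 - rr (k - m)) ∨
      SLeft (fun s => ii (r + 1 - s)) (fun s => jj (r + 1 - s))
        (r + 1 - rr (k - (m - 1)) - 1) (r + 1 - rr (k - m))
    rw [show k - (m - 1) = k - m + 1 from by omega]
    have hb1 : 1 ≤ rr (k - m) := hrr1 _ (by omega)
    have hb2 : rr (k - m + 1) ≤ r := hrrle _ (by omega)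
    have hb3 : rr (k - m) < rr (k - m + 1) := h.rrmono (k - m) (by omega)
    rw [rev_SRight r (r + 1 - rr (k - m + 1) - 1) (r + 1 - rr (k - m)) ii jj (by omega),
        rev_SLeft r (r + 1 - rr (k - m + 1) - 1) (r + 1 - rr (k - m)) ii jj (by omega)]
    rw [show r - (r + 1 - rr (k - m)) = rr (k - m) - 1 from by omega,
        show r - (r + 1 - rr (k - m + 1) - 1) = rr (k - m + 1) from by omega]
    have hm' := h.mono (k - m + 1) (by omega) (by omega)
    rw [Nat.add_sub_cancel] at hm'
    exact hm'.symm
  · -- alt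
    intro m hm1 hm2
    show SRight (fun s => ii (r + 1 - s)) (fun s => jj (r + 1 - s))
        (r + 1 - rr (k - (m - 1)) - 1) (r + 1 - rr (k - m)) ↔
      SLeft (fun s => ii (r + 1 - s)) (fun s => jj (r + 1 - s))
        (r + 1 - rr (k - m) - 1) (r + 1 - rr (k - (m + 1)))
    rw [show k - (m - 1) = k - m + 1 from by omega]
    have hb1 : 1 ≤ rr (k - (m + 1)) := hrr1 _ (by omega)
    have hb1' : 1 ≤ rr (k - m) := hrr1 _ (by omega)
    have hb2 : rr (k - m + 1) ≤ r := hrrle _ (by omega)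
    have hb2' : rr (k - m) ≤ r := hrrle _ (by omega)
    have hb3 : rr (k - (m + 1)) < rr (k - m) := by
      have := h.rrmono (k - (m + 1)) (by omega)
      rwa [show k - (m + 1) + 1 = k - m from by omega] at this
    have hb4 : rr (k - m) < rr (k - m + 1) := h.rrmono (k - m) (by omega)
    rw [rev_SRight r (r + 1 - rr (k - m + 1) - 1) (r + 1 - rr (k - m)) ii jj (by omega),
        rev_SLeft r (r + 1 - rr (k - m) - 1) (r + 1 - rr (k - (m + 1))) ii jj (by omega)]
    rw [show r - (r + 1 - rr (k - m)) = rr (k - m) - 1 from by omega,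
        show r - (r + 1 - rr (k - m + 1) - 1) = rr (k - m + 1) from by omega,
        show r - (r + 1 - rr (k - (m + 1))) = rr (k - (m + 1)) - 1 from by omega,
        show r - (r + 1 - rr (k - m) - 1) = rr (k - m) from by omega]
    have halt' := h.alt (k - m) (by omega) (by omega)
    rw [show k - m - 1 = k - (m + 1) from by omega] at halt'
    exact halt'.symm
  · -- nonoverlap
    intro m s t hm1 hm2 hs1 hs2 ht1 ht2
    intro hov
    have hb2' : rr (k - m) ≤ r := hrrle _ (by omega)
    have hb1' : 1 ≤ rr (k - m) := hrr1 _ (by omega)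
    have hs2' : s < r + 1 - rr (k - m) := hs2
    have ht1' : r + 1 - rr (k - m) < t := ht1
    exact h.nonoverlap (k - m) (r + 1 - t) (r + 1 - s) (by omega) (by omega) (by omega)
      (by omega) (by omega) (by omega) (overlap_symm.mp hov)
  · -- connectedness iff
    rw [rev_conn n r 0 r ii jj le_rfl, Nat.sub_self, Nat.sub_zero]
  · -- prime decomposition
    intro c L hpd
    obtain ⟨hL, hc0, hcL, hcm, hcp, hcc⟩ := hpd
    have hcmle : ∀ a b, a ≤ b → b ≤ L → c a ≤ c b := mono_of_strict hcm
    have hcle : ∀ t, t ≤ L → c t ≤ r := by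
      intro t ht
      have := hcmle t L ht le_rfl
      omega
    refine ⟨hL, ?_, ?_, ?_, ?_, ?_⟩
    · show r - c (L - 0) = 0
      rw [Nat.sub_zero, hcL, Nat.sub_self]
    · show r - c (L - L) = r
      rw [Nat.sub_self, hc0, Nat.sub_zero]
    · intro t ht
      show r - c (L - t) < r - c (L - (t + 1))
      have h1 := hcm (L - (t + 1)) (by omega)
      rw [show L - (t + 1) + 1 = L - t from by omega] at h1
      have h2 := hcle (L - t) (by omega)
      omega
    · intro t ht
      have hcle1 := hcle (L - t) (by omega)
      have hcle2 := hcle (L - (t + 1)) (by omega)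
      constructor
      · show SegConnected n (fun s => ii (r + 1 - s)) (fun s => jj (r + 1 - s))
          (r - c (L - t)) (r - c (L - (t + 1)))
        rw [rev_conn n r (r - c (L - t)) (r - c (L - (t + 1))) ii jj (by omega)]
        rw [show r - (r - c (L - (t + 1))) = c (L - (t + 1)) from by omega,
            show r - (r - c (L - t)) = c (L - t) from by omega]
        have := (hcp (L - (t + 1)) (by omega)).1
        rwa [show L - (t + 1) + 1 = L - t from by omega] at this
      · intro m hm1 hm2 hlo hhi
        have hb1 : 1 ≤ rr (k - m) := hrr1 _ (by omega)
        have hb2 : rr (k - m) ≤ r := hrrle _ (by omega)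
        have hlo' : r - c (L - t) + 1 < r + 1 - rr (k - m) := hlo
        have hhi' : r + 1 - rr (k - m) < r - c (L - (t + 1)) := hhi
        have hstep := (hcp (L - (t + 1)) (by omega)).2 (k - m) (by omega) (by omega)
          (by omega)
          (by rw [show L - (t + 1) + 1 = L - t from by omega]; omega)
        constructor
        · show ii (r + 1 - (r + 1 - rr (k - m) - 1)) ≠ ii (r + 1 - (r + 1 - rr (k - m) + 1))
          rw [show r + 1 - (r + 1 - rr (k - m) - 1) = rr (k - m) + 1 from by omega,
              show r + 1 - (r + 1 - rr (k - m) + 1) = rr (k - m) - 1 from by omega]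
          exact hstep.1.symm
        · show jj (r + 1 - (r + 1 - rr (k - m) - 1)) ≠ jj (r + 1 - (r + 1 - rr (k - m) + 1))
          rw [show r + 1 - (r + 1 - rr (k - m) - 1) = rr (k - m) + 1 from by omega,
              show r + 1 - (r + 1 - rr (k - m) + 1) = rr (k - m) - 1 from by omega]
          exact hstep.2.symm
    · intro t ht1 ht2
      rcases Nat.eq_or_lt_of_le ht2 with rfl | hlt
      · refine Or.inl ?_
        show r - c (t - t) = r
        rw [Nat.sub_self, hc0, Nat.sub_zero]
      · have hp1 : 1 ≤ c (L - t) := by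
          have h1 : c 0 < c 1 := hcm 0 (by omega)
          have h2 := hcmle 1 (L - t) (by omega) (by omega)
          omega
        have hp2 : c (L - t) < r := by
          have h1 := hcm (L - 1) (by omega)
          rw [show L - 1 + 1 = L from by omega, hcL] at h1
          have h2 := hcmle (L - t) (L - 1) (by omega) (by omega)
          omega
        rcases hcc (L - t) (by omega) (by omega) with hEq | hnc | ⟨m, ε, hm1, hm2, hε, hpe, hbc⟩
        · exfalso; omega
        · refine Or.inr (Or.inl ?_)
          show ¬ ConnPair n (ii (r + 1 - (r - c (L - t)))) (jj (r + 1 - (r - c (L - t))))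
            (ii (r + 1 - (r - c (L - t) + 1))) (jj (r + 1 - (r - c (L - t) + 1)))
          rw [show r + 1 - (r - c (L - t)) = c (L - t) + 1 from by omega,
              show r + 1 - (r - c (L - t) + 1) = c (L - t) from by omega]
          intro hcp2
          exact hnc (connPair_symm.mp hcp2)
        · refine Or.inr (Or.inr ?_)
          have hRb : 2 ≤ rr m := by
            have h01 : rr 0 < rr 1 := h.rrmono 0 (by omega)
            have h02 := hmle 1 m hm1 (by omega)
            omega
          have hRr : rr m ≤ r := hrrle m (by omega)
          refine ⟨k - m, 1 - ε, by omega, by omega, by omega, ?_, ?_⟩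
          · show r - c (L - t) = r + 1 - rr (k - (k - m)) - (1 - ε)
            rw [show k - (k - m) = m from by omega]
            omega
          · exact rev_boundary h hm1 hm2 hε hbc


end AltSnakePaper
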